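/- Let 𝒦 = {K₁, …, K_M} be a finite set of row-stochastic N×N real matrices, each with strictly positive diagonal entries, let p₁, …, p_M be strictly positive reals summing to 1, and let (K(t))_{t≥1} be an i.i.d. sequence of random matrices on a probability space with ℙ[K(t) = Kᵢ] = pᵢ for each i. Set P(t) = K(1)K(2)⋯K(t) and w(t)ᵀ = 𝟙ᵀP(t). Let m̄ = min{ (Kᵢ)_{jk} : (Kᵢ)_{jk} > 0 } be the smallest strictly positive entry occurring among the matrices of 𝒦, and suppose there exist an integer L ≥ 1 and indices k₁, …, k_L such that all entries of K_{k₁}⋯K_{k_L} are strictly positive. Then, almost surely, the set of times { t ≥ 1 : min_{1≤k≤N} w_k(t) ≥ m̄^L } is infinite; equivalently, Ψ₁(t) := ‖x(0)‖₂² / (min_k w_k(t))² satisfies Ψ₁(t) ≤ ‖x(0)‖₂² · m̄^{−2L} for infinitely many t, for any fixed x(0) ∈ ℝᴺ with x(0) ≠ 0. -/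

import Mathlib

open Matrix Finset MeasureTheory

/-- A square real matrix is row-stochastic if it has nonnegative entries and
each of its rows sums to 1. -/
def RowStochastic {N : ℕ} (K : Matrix (Fin N) (Fin N) ℝ) : Prop :=
  (∀ i j, 0 ≤ K i j) ∧ ∀ i, ∑ j, K i j = 1

lemma rowStochastic_list_prod {N : ℕ} :
    ∀ l : List (Matrix (Fin N) (Fin N) ℝ), (∀ A ∈ l, RowStochastic A) →
      RowStochastic l.prod := by
  intro l
  induction l with
  | nil =>
    intro _
    constructor
    · intro i j
      rw [List.prod_nil]
      by_cases h : i = j <;> simp [Matrix.one_apply, h]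
    · intro i
      simp [Matrix.one_apply]
  | cons A l ih =>
    intro h
    have hA := h A (by simp)
    have hl := ih (fun B hB => h B (by simp [hB]))
    rw [List.prod_cons]
    constructor
    · intro i j
      rw [Matrix.mul_apply]
      exact Finset.sum_nonneg fun k _ => mul_nonneg (hA.1 i k) (hl.1 k j)
    · intro i
      simp only [Matrix.mul_apply]
      rw [Finset.sum_comm]
      simp only [← Finset.mul_sum, hl.2, mul_one]
      exact hA.2 i

lemma prod_entry_lb {N : ℕ} (mbar : ℝ) (hm : 0 < mbar) :
    ∀ l : List (Matrix (Fin N) (Fin N) ℝ),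
      (∀ A ∈ l, ∀ i j, 0 ≤ A i j ∧ (0 < A i j → mbar ≤ A i j)) →
      ∀ i j, 0 ≤ l.prod i j ∧ (0 < l.prod i j → mbar ^ l.length ≤ l.prod i j) := by
  intro l
  induction l with
  | nil =>
    intro _ i j
    rw [List.prod_nil]
    constructor
    · by_cases h : i = j <;> simp [Matrix.one_apply, h]
    · intro hpos
      by_cases h : i = j <;> simp [Matrix.one_apply, h] at hpos ⊢
  | cons A l ih =>
    intro h i j
    have hA := h A (by simp)
    have hl := ih (fun B hB => h B (by simp [hB]))
    rw [List.prod_cons]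
    have hterm : ∀ k, 0 ≤ A i k * l.prod k j :=
      fun k => mul_nonneg (hA i k).1 (hl k j).1
    constructor
    · rw [Matrix.mul_apply]
      exact Finset.sum_nonneg fun k _ => hterm k
    · intro hpos
      rw [Matrix.mul_apply] at hpos ⊢
      have hex : ∃ k, 0 < A i k * l.prod k j := by
        by_contra h'
        push_neg at h'
        have : ∑ k, A i k * l.prod k j ≤ 0 :=
          Finset.sum_nonpos fun k _ => h' k
        linarith
      obtain ⟨k, hk⟩ := hex
      have hAk : 0 < A i k ∧ 0 < l.prod k j := by
        rcases mul_pos_iff.mp hk with h1 | h1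
        · exact h1
        · exact absurd h1.1 (not_lt.mpr (hA i k).1)
      have h1 : mbar ≤ A i k := (hA i k).2 hAk.1
      have h2 : mbar ^ l.length ≤ l.prod k j := (hl k j).2 hAk.2
      calc mbar ^ (A :: l).length = mbar * mbar ^ l.length := by
            rw [List.length_cons, pow_succ, mul_comm]
        _ ≤ A i k * l.prod k j :=
            mul_le_mul h1 h2 (pow_nonneg hm.le _) hAk.1.le
        _ ≤ ∑ k, A i k * l.prod k j :=
            Finset.single_le_sum (fun k _ => hterm k) (Finset.mem_univ k)

lemma pattern_io {M : ℕ} (p : Fin M → ℝ) (hp : ∀ k, 0 < p k) (hpsum : ∑ k, p k = 1)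
    {Ω : Type*} [MeasurableSpace Ω] (μ : Measure Ω) [IsProbabilityMeasure μ]
    (ι : ℕ → Ω → Fin M)
    (hiid : ∀ (s : Finset ℕ) (g : ℕ → Fin M),
      μ {ω | ∀ t ∈ s, ι t ω = g t} = ∏ t ∈ s, ENNReal.ofReal (p (g t)))
    (L : ℕ) (hL : 1 ≤ L) (f : Fin L → Fin M) :
    ∀ᵐ ω ∂μ, ∀ m : ℕ, ∃ n, m ≤ n ∧ ∀ s : Fin L, ι (n * L + 1 + s) ω = f s := by
  have hL' : 0 < L := hL
  set q : ℝ := ∏ s, p (f s) with hq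
  have hq0 : 0 < q := Finset.prod_pos fun s _ => hp (f s)
  have htot : ∑ g : Fin L → Fin M, ∏ s, p (g s) = 1 := by
    rw [← Fintype.piFinset_univ, ← Finset.prod_univ_sum]
    simp [hpsum]
  have hq1 : q ≤ 1 := by
    rw [← htot]
    exact Finset.single_le_sum
      (fun g _ => Finset.prod_nonneg fun s _ => (hp (g s)).le) (Finset.mem_univ f)
  have herase : ∑ g ∈ (Finset.univ.erase f : Finset (Fin L → Fin M)), ∏ s, p (g s)
      = 1 - q := by
    rw [Finset.sum_erase_eq_sub (Finset.mem_univ f), htot]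
  -- the key quantitative bound
  have key : ∀ m j : ℕ,
      μ {ω | ∀ n, m ≤ n → ¬ ∀ s : Fin L, ι (n * L + 1 + s) ω = f s}
        ≤ ENNReal.ofReal ((1 - q) ^ j) := by
    intro m j
    set C : (Fin j → Fin L → Fin M) → Set Ω := fun G =>
      {ω | ∀ a : Fin j, ∀ s : Fin L, ι ((m + a) * L + 1 + s) ω = G a s} with hCdef
    have hdiv : ∀ (a : Fin j) (s : Fin L),
        ((m + (a : ℕ)) * L + 1 + (s : ℕ) - 1) / L - m = (a : ℕ) := by
      intro a s
      have h1 : (m + (a : ℕ)) * L + 1 + (s : ℕ) - 1 = (s : ℕ) + (m + a) * L := by omega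
      rw [h1, Nat.add_mul_div_right _ _ hL', Nat.div_eq_of_lt s.isLt]
      omega
    have hmod : ∀ (a : Fin j) (s : Fin L),
        ((m + (a : ℕ)) * L + 1 + (s : ℕ) - 1) % L = (s : ℕ) := by
      intro a s
      have h1 : (m + (a : ℕ)) * L + 1 + (s : ℕ) - 1 = (s : ℕ) + (m + a) * L := by omega
      rw [h1, Nat.add_mul_mod_self_right, Nat.mod_eq_of_lt s.isLt]
    have hC : ∀ G, μ (C G) = ∏ a, ∏ s, ENNReal.ofReal (p (G a s)) := by
      intro G
      set φ : Fin j × Fin L → ℕ := fun a => (m + a.1) * L + 1 + a.2 with hφdef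
      set g : ℕ → Fin M := fun t =>
        if h : (t - 1) / L - m < j ∧ (t - 1) % L < L then
          G ⟨(t - 1) / L - m, h.1⟩ ⟨(t - 1) % L, h.2⟩
        else f ⟨0, hL'⟩ with hgdef
      have hφg : ∀ (a : Fin j) (s : Fin L),
          g ((m + (a : ℕ)) * L + 1 + (s : ℕ)) = G a s := by
        intro a s
        have hc : ((m + (a : ℕ)) * L + 1 + (s : ℕ) - 1) / L - m < j ∧
            ((m + (a : ℕ)) * L + 1 + (s : ℕ) - 1) % L < L :=
          ⟨by rw [hdiv a s]; exact a.isLt, by rw [hmod a s]; exact s.isLt⟩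
        rw [hgdef]
        dsimp only
        rw [dif_pos hc,
          show (⟨((m + (a : ℕ)) * L + 1 + (s : ℕ) - 1) / L - m, hc.1⟩ : Fin j) = a from
            Fin.ext (hdiv a s),
          show (⟨((m + (a : ℕ)) * L + 1 + (s : ℕ) - 1) % L, hc.2⟩ : Fin L) = s from
            Fin.ext (hmod a s)]
      have hinj : ∀ x ∈ (Finset.univ : Finset (Fin j × Fin L)),
          ∀ y ∈ (Finset.univ : Finset (Fin j × Fin L)), φ x = φ y → x = y := by
        rintro ⟨a, s⟩ - ⟨a', s'⟩ - hxy
        have h1 : (φ (a, s) - 1) / L - m = (φ (a', s') - 1) / L - m := by rw [hxy]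
        have h2 : (φ (a, s) - 1) % L = (φ (a', s') - 1) % L := by rw [hxy]
        rw [hφdef] at h1 h2
        simp only [hdiv, hmod] at h1 h2
        exact Prod.ext (Fin.ext h1) (Fin.ext h2)
      have hset : C G = {ω | ∀ t ∈ Finset.image φ Finset.univ, ι t ω = g t} := by
        ext ω
        simp only [hCdef, Set.mem_setOf_eq, Finset.mem_image, Finset.mem_univ, true_and]
        constructor
        · rintro h t ⟨⟨a, s⟩, rfl⟩
          exact (h a s).trans (hφg a s).symm
        · intro h a s
          exact (h (φ (a, s)) ⟨(a, s), rfl⟩).trans (hφg a s)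
      rw [hset, hiid, Finset.prod_image hinj]
      rw [← Fintype.prod_prod_type (fun x : Fin j × Fin L => ENNReal.ofReal (p (G x.1 x.2)))]
      refine Finset.prod_congr rfl fun x _ => ?_
      obtain ⟨a, s⟩ := x
      exact congrArg ENNReal.ofReal (congrArg p (hφg a s))
    have hsub : {ω | ∀ n, m ≤ n → ¬ ∀ s : Fin L, ι (n * L + 1 + s) ω = f s}
        ⊆ ⋃ G ∈ Fintype.piFinset (fun _ : Fin j => Finset.univ.erase f), C G := by
      intro ω hω
      have hGmem : (fun (a : Fin j) (s : Fin L) => ι ((m + (a : ℕ)) * L + 1 + (s : ℕ)) ω)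
          ∈ Fintype.piFinset (fun _ : Fin j => Finset.univ.erase f) := by
        rw [Fintype.mem_piFinset]
        intro a
        rw [Finset.mem_erase]
        refine ⟨?_, Finset.mem_univ _⟩
        intro hcontra
        exact hω (m + a) (Nat.le_add_right _ _) fun s => congrFun hcontra s
      exact Set.mem_biUnion hGmem (fun a s => rfl)
    calc μ {ω | ∀ n, m ≤ n → ¬ ∀ s : Fin L, ι (n * L + 1 + s) ω = f s}
        ≤ ∑ G ∈ Fintype.piFinset (fun _ : Fin j => Finset.univ.erase f), μ (C G) :=
          le_trans (measure_mono hsub) (measure_biUnion_finset_le _ _)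
      _ = ∑ G ∈ Fintype.piFinset (fun _ : Fin j => Finset.univ.erase f),
            ENNReal.ofReal (∏ a, ∏ s, p (G a s)) := by
          refine Finset.sum_congr rfl fun G _ => ?_
          rw [hC G, ENNReal.ofReal_prod_of_nonneg
            (fun a _ => Finset.prod_nonneg fun s _ => (hp _).le)]
          exact Finset.prod_congr rfl fun a _ =>
            (ENNReal.ofReal_prod_of_nonneg (fun s _ => (hp _).le)).symm
      _ = ENNReal.ofReal (∑ G ∈ Fintype.piFinset (fun _ : Fin j => Finset.univ.erase f),
            ∏ a, ∏ s, p (G a s)) :=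
          (ENNReal.ofReal_sum_of_nonneg fun G _ =>
            Finset.prod_nonneg fun a _ => Finset.prod_nonneg fun s _ => (hp _).le).symm
      _ = ENNReal.ofReal ((1 - q) ^ j) := by
          rw [← Finset.prod_univ_sum (fun _ : Fin j => Finset.univ.erase f)
            (fun a g => ∏ s, p (g s))]
          simp [herase]
  have hzero : ∀ m, μ {ω | ∀ n, m ≤ n → ¬ ∀ s : Fin L, ι (n * L + 1 + s) ω = f s} = 0 := by
    intro m
    refine le_antisymm ?_ zero_le
    have htend : Filter.Tendsto (fun j : ℕ => ENNReal.ofReal ((1 - q) ^ j))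
        Filter.atTop (nhds 0) := by
      have h0 : Filter.Tendsto (fun j : ℕ => (1 - q) ^ j) Filter.atTop (nhds 0) :=
        tendsto_pow_atTop_nhds_zero_of_lt_one (by linarith) (by linarith)
      have := (ENNReal.continuous_ofReal.tendsto 0).comp h0
      simpa [Function.comp_def] using this
    exact ge_of_tendsto' htend (key m)
  rw [MeasureTheory.ae_iff]
  refine measure_mono_null ?_ (measure_iUnion_null hzero)
  intro ω hω
  simp only [Set.mem_setOf_eq] at hω
  push_neg at hω
  obtain ⟨m, hm⟩ := hω
  refine Set.mem_iUnion.mpr ⟨m, fun n hn hall => ?_⟩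
  obtain ⟨s, hs⟩ := hm n hn
  exact hs (hall s)

theorem stmt12 {N M : ℕ} (hN : 1 ≤ N) (hM : 1 ≤ M)
    (K : Fin M → Matrix (Fin N) (Fin N) ℝ)
    (hK : ∀ k, RowStochastic (K k))
    (hdiag : ∀ k i, 0 < K k i i)
    (p : Fin M → ℝ) (hp : ∀ k, 0 < p k) (hpsum : ∑ k, p k = 1)
    -- `(K(t))_{t ≥ 1}` is an i.i.d. sequence of random matrices, `K(t) = K (ι t ω)`,
    -- with `ℙ[K(t) = Kᵢ] = pᵢ`:
    {Ω : Type*} [MeasurableSpace Ω] (μ : Measure Ω) [IsProbabilityMeasure μ]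
    (ι : ℕ → Ω → Fin M) (hmeas : ∀ t, Measurable (ι t))
    (hiid : ∀ (s : Finset ℕ) (g : ℕ → Fin M),
      μ {ω | ∀ t ∈ s, ι t ω = g t} = ∏ t ∈ s, ENNReal.ofReal (p (g t)))
    -- `P(t) = K(1) K(2) ⋯ K(t)` and `w(t)ᵀ = 𝟙ᵀ P(t)`:
    (P : ℕ → Ω → Matrix (Fin N) (Fin N) ℝ)
    (hP : ∀ t ω, P t ω = ((List.range t).map fun u => K (ι (u + 1) ω)).prod)
    (w : ℕ → Ω → Fin N → ℝ)
    (hw : ∀ t ω j, w t ω j = ∑ i, P t ω i j)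
    -- `mbar` is the smallest strictly positive entry occurring among the matrices of `𝒦`:
    (mbar : ℝ)
    (hlb : ∀ k i j, 0 < K k i j → mbar ≤ K k i j)
    (hmem : ∃ k i j, K k i j = mbar ∧ 0 < K k i j)
    -- some product of `L` matrices of `𝒦` has all entries strictly positive:
    (L : ℕ) (hL : 1 ≤ L)
    (hpos : ∃ f : Fin L → Fin M, ∀ i j, 0 < ((List.ofFn fun s => K (f s)).prod) i j)
    (x0 : Fin N → ℝ) (hx0 : x0 ≠ 0) :
    ∀ᵐ ω ∂μ,
      {t : ℕ | 1 ≤ t ∧ mbar ^ L ≤ ⨅ k, w t ω k}.Infinite ∧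
      {t : ℕ | 1 ≤ t ∧
        (∑ i, x0 i ^ 2) / (⨅ k, w t ω k) ^ 2 ≤
          (∑ i, x0 i ^ 2) * (mbar ^ (2 * L))⁻¹}.Infinite := by
  obtain ⟨f, hf⟩ := hpos
  have hm : 0 < mbar := by
    obtain ⟨k, i, j, he, hgt⟩ := hmem
    rwa [he] at hgt
  haveI : Nonempty (Fin N) := Fin.pos_iff_nonempty.mp hN
  filter_upwards [pattern_io p hp hpsum μ ι hiid L hL f] with ω hω
  -- the matrix `Q` and its entrywise lower bound
  set Q : Matrix (Fin N) (Fin N) ℝ := (List.ofFn fun s => K (f s)).prod with hQdef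
  have hQlb : ∀ i j, mbar ^ L ≤ Q i j := by
    intro i j
    have := (prod_entry_lb mbar hm (List.ofFn fun s => K (f s))
      (by
        intro B hB i' j'
        obtain ⟨s, rfl⟩ := List.mem_ofFn.mp hB
        exact ⟨(hK (f s)).1 i' j', hlb (f s) i' j'⟩) i j).2 (hf i j)
    rwa [List.length_ofFn] at this
  -- key deterministic step
  have key1 : ∀ n, (∀ s : Fin L, ι (n * L + 1 + s) ω = f s) →
      1 ≤ (n + 1) * L ∧ mbar ^ L ≤ ⨅ k, w ((n + 1) * L) ω k := by
    intro n hmatch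
    set A : Matrix (Fin N) (Fin N) ℝ :=
      ((List.range (n * L)).map fun u => K (ι (u + 1) ω)).prod with hAdef
    have hA : RowStochastic A := by
      apply rowStochastic_list_prod
      intro B hB
      obtain ⟨u, -, rfl⟩ := List.mem_map.mp hB
      exact hK _
    have hPt : P ((n + 1) * L) ω = A * Q := by
      rw [hP, show (n + 1) * L = n * L + L by ring, List.range_add, List.map_append,
        List.prod_append]
      congr 1
      rw [List.map_map]
      congr 1
      apply List.ext_getElem
      · simp
      · intro i h1 h2
        simp only [List.getElem_map, List.getElem_range, List.getElem_ofFn, Function.comp_apply]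
        rw [show n * L + i + 1 = n * L + 1 + i by omega]
        exact congrArg K (hmatch ⟨i, by simpa using h2⟩)
    have hwk : ∀ k, mbar ^ L ≤ w ((n + 1) * L) ω k := by
      intro k
      rw [hw, hPt]
      have hcolnn : ∀ j, (0:ℝ) ≤ ∑ i, A i j :=
        fun j => Finset.sum_nonneg fun i _ => hA.1 i j
      calc mbar ^ L ≤ (N : ℝ) * mbar ^ L :=
            le_mul_of_one_le_left (pow_nonneg hm.le L) (by exact_mod_cast hN)
        _ = (∑ j, ∑ i, A i j) * mbar ^ L := by
            rw [Finset.sum_comm]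
            simp [hA.2]
        _ = ∑ j, (∑ i, A i j) * mbar ^ L := Finset.sum_mul _ _ _
        _ ≤ ∑ j, (∑ i, A i j) * Q j k :=
            Finset.sum_le_sum fun j _ =>
              mul_le_mul_of_nonneg_left (hQlb j k) (hcolnn j)
        _ = ∑ j, ∑ i, A i j * Q j k := by
            simp [Finset.sum_mul]
        _ = ∑ i, ∑ j, A i j * Q j k := Finset.sum_comm
        _ = ∑ i, (A * Q) i k := by
            simp [Matrix.mul_apply]
    exact ⟨Nat.one_le_iff_ne_zero.mpr (by positivity), le_ciInf hwk⟩
  have hT : {n : ℕ | ∀ s : Fin L, ι (n * L + 1 + s) ω = f s}.Infinite := by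
    by_contra hfin
    rw [Set.not_infinite] at hfin
    obtain ⟨b, hb⟩ := hfin.bddAbove
    obtain ⟨n, hn, hmatch⟩ := hω (b + 1)
    have : n ≤ b := hb hmatch
    omega
  have h1 : {t : ℕ | 1 ≤ t ∧ mbar ^ L ≤ ⨅ k, w t ω k}.Infinite := by
    refine Set.Infinite.mono ?_ (hT.image (f := fun n => (n + 1) * L) ?_)
    · rintro t ⟨n, hn, rfl⟩
      exact key1 n hn
    · intro a _ b _ hab
      have := Nat.eq_of_mul_eq_mul_right (Nat.lt_of_lt_of_le Nat.zero_lt_one hL) hab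
      omega
  refine ⟨h1, Set.Infinite.mono ?_ h1⟩
  rintro t ⟨ht1, ht2⟩
  refine ⟨ht1, ?_⟩
  have hpow : mbar ^ (2 * L) ≤ (⨅ k, w t ω k) ^ 2 := by
    rw [show 2 * L = L * 2 by ring, pow_mul]
    exact pow_le_pow_left₀ (pow_nonneg hm.le L) ht2 2
  have hd : (∑ i, x0 i ^ 2) / (⨅ k, w t ω k) ^ 2 ≤ (∑ i, x0 i ^ 2) / mbar ^ (2 * L) :=
    div_le_div_of_nonneg_left (Finset.sum_nonneg fun i _ => sq_nonneg (x0 i))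
      (pow_pos hm _) hpow
  rwa [div_eq_mul_inv] at hd
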